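/- Let R be a discrete valuation domain with finite residue field of order q, and let F ∈ Int(R) be a polynomial that splits into linear factors over the quotient field of R and whose set of roots S is contained in R. If F is absolutely irreducible in Int(R), then |S| ≡ 1 (mod q−1). -/

import Mathlib

open Polynomial

section Defs

variable (R K : Type*)

/-- `Int(R) = {F ∈ K[x] ∣ F(R) ⊆ R}`, the ring of integer-valued polynomials,
as a subring of `K[x]`. -/
def intPoly [CommRing R] [CommRing K] [Algebra R K] : Subring (Polynomial K) where
  carrier := {F | ∀ r : R, ∃ a : R, F.eval (algebraMap R K r) = algebraMap R K a}
  mul_mem' := by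
    rintro f g hf hg r
    obtain ⟨a, ha⟩ := hf r
    obtain ⟨b, hb⟩ := hg r
    exact ⟨a * b, by simp [ha, hb]⟩
  one_mem' := fun r => ⟨1, by simp⟩
  add_mem' := by
    rintro f g hf hg r
    obtain ⟨a, ha⟩ := hf r
    obtain ⟨b, hb⟩ := hg r
    exact ⟨a + b, by simp [ha, hb]⟩
  zero_mem' := fun r => ⟨0, by simp⟩
  neg_mem' := by
    rintro f hf r
    obtain ⟨a, ha⟩ := hf r
    exact ⟨-a, by simp [ha]⟩

/-- Polynomials with coefficients in `R` are integer-valued. -/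
theorem map_mem_intPoly [CommRing R] [CommRing K] [Algebra R K] (f : Polynomial R) :
    f.map (algebraMap R K) ∈ intPoly R K :=
  fun r => ⟨f.eval r, by rw [Polynomial.eval_map, Polynomial.eval₂_at_apply]⟩

/-- An element `d` of a commutative monoid is absolutely irreducible if it is irreducible
and, for every `n ≥ 1`, the only factorization of `d ^ n` into irreducibles is, up to order
and unit factors, `d ⋯ d` (`n` copies). -/
def AbsolutelyIrreducible {α : Type*} [CommMonoid α] (d : α) : Prop :=
  Irreducible d ∧ ∀ n : ℕ, 1 ≤ n → ∀ l : Multiset α, (∀ a ∈ l, Irreducible a) →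
    l.prod = d ^ n → Multiset.card l = n ∧ ∀ a ∈ l, Associated a d

/-- The fixed divisor of a polynomial `f ∈ R[x]`: the ideal of `R` generated by the
values of `f` on `R`. -/
def fixDiv [CommRing R] (f : Polynomial R) : Ideal R :=
  Ideal.span (Set.range fun a => f.eval a)

/-- The fixed divisor of an integer-valued polynomial `F ∈ Int(R)`: the ideal of `R`
generated by (the elements of `R` representing) the values of `F` on `R`. -/
def fixDivK [CommRing R] [CommRing K] [Algebra R K] (F : Polynomial K) : Ideal R :=
  Ideal.span {a : R | ∃ r : R, F.eval (algebraMap R K r) = algebraMap R K a}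

/-- The (normalized additive) valuation of a nonzero element of a discrete valuation
ring: the largest `n` such that `x ∈ M ^ n`, where `M` is the maximal ideal. -/
noncomputable def mval [CommRing R] [IsLocalRing R] (x : R) : ℕ :=
  sSup {n : ℕ | x ∈ IsLocalRing.maximalIdeal R ^ n}

open scoped Classical in
/-- The valuation `v : R → ℕ∞`, with `v 0 = ⊤`. -/
noncomputable def vR [CommRing R] [IsLocalRing R] (x : R) : ℕ∞ :=
  if x = 0 then ⊤ else (mval R x : ℕ∞)

open scoped Classical in
/-- The valuation extended to the quotient field `K`, with `v 0 = ⊤`. -/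
noncomputable def vK [CommRing R] [IsLocalRing R] [CommRing K] [Algebra R K]
    [IsLocalization (nonZeroDivisors R) K] (x : K) : WithTop ℤ :=
  if x = 0 then ⊤
  else (((mval R (IsLocalization.sec (nonZeroDivisors R) x).1 : ℤ) -
        (mval R ((IsLocalization.sec (nonZeroDivisors R) x).2 : R) : ℤ) : ℤ) : WithTop ℤ)

/-- The residue class `s + M ^ n` of `s` modulo the `n`-th power of the maximal ideal. -/
def resClass [CommRing R] [IsLocalRing R] (s : R) (n : ℕ) : Set R :=
  {x | x - s ∈ IsLocalRing.maximalIdeal R ^ n}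

/-- A finite set `S ⊆ R` is balanced if, letting `n s` for each `s ∈ S` be the minimal
non-negative integer with `(s + M ^ (n s)) ∩ S = {s}`, the residue classes `s + M ^ (n s)`
(`s ∈ S`) are pairwise disjoint and cover `R`. -/
def IsBalanced [CommRing R] [IsLocalRing R] (S : Finset R) : Prop :=
  S.Nonempty ∧
  ∃ n : R → ℕ,
    (∀ s ∈ S, resClass R s (n s) ∩ (S : Set R) = {s} ∧
      ∀ k : ℕ, resClass R s k ∩ (S : Set R) = {s} → n s ≤ k) ∧
    (∀ s ∈ S, ∀ t ∈ S, s ≠ t → Disjoint (resClass R s (n s)) (resClass R t (n t))) ∧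
    (⋃ s ∈ S, resClass R s (n s)) = Set.univ

/-- `ρ` describes the `M`-adic partition `C_S` associated to `S`: the partition of `R`
into the residue classes `s + M ^ (ρ s)`, `s ∈ S`, such that each block contains both a
residue class of `M ^ (ρ s + 1)` intersecting `S` and one disjoint from `S`. -/
def IsSPartition [CommRing R] [IsLocalRing R] (S : Finset R) (ρ : R → ℕ) : Prop :=
  (⋃ s ∈ S, resClass R s (ρ s)) = Set.univ ∧
  (∀ s ∈ S, ∀ t ∈ S,
    resClass R s (ρ s) = resClass R t (ρ t) ∨
      Disjoint (resClass R s (ρ s)) (resClass R t (ρ t))) ∧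
  (∀ s ∈ S,
    (∃ u : R, resClass R u (ρ s + 1) ⊆ resClass R s (ρ s) ∧
      (resClass R u (ρ s + 1) ∩ (S : Set R)).Nonempty) ∧
    (∃ u : R, resClass R u (ρ s + 1) ⊆ resClass R s (ρ s) ∧
      resClass R u (ρ s + 1) ∩ (S : Set R) = ∅))

/-- `S'` is a balanced set associated to `S` (relative to the partition data `ρ` of `C_S`):
`S' ⊆ S` is balanced, consists of one representative per block of `C_S`, and its associated
partition `C_{S'}` coincides with `C_S`. -/
def IsAssociatedBalancedSubset [CommRing R] [IsLocalRing R] (S S' : Finset R) (ρ : R → ℕ) :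
    Prop :=
  S' ⊆ S ∧ IsBalanced R S' ∧
  (∀ s ∈ S', ∀ t ∈ S', s ≠ t → Disjoint (resClass R s (ρ s)) (resClass R t (ρ t))) ∧
  (⋃ s ∈ S', resClass R s (ρ s)) = Set.univ

open scoped Classical in
/-- The partition matrix of the partition `{s + M ^ (ρ s) : s ∈ S}`: diagonal entries
`ρ s`, off-diagonal entries `v (s - t)`. -/
noncomputable def partitionMatrix [CommRing R] [IsLocalRing R] (S : Finset R) (ρ : R → ℕ) :
    Matrix {x // x ∈ S} {x // x ∈ S} ℤ :=
  Matrix.of fun s t =>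
    if (s : R) = (t : R) then (ρ (s : R) : ℤ) else (mval R ((s : R) - (t : R)) : ℤ)

/-- `m` is the vector of multiplicities of the equalizing polynomial of `S`: the unique
vector of positive integers with gcd `1` such that `A · m = e · (1, …, 1)ᵀ` for some
non-negative integer `e`, where `A` is the partition matrix. -/
def IsEqualizingVector [CommRing R] [IsLocalRing R] (S : Finset R) (ρ : R → ℕ) (m : R → ℕ) :
    Prop :=
  (∀ s ∈ S, 0 < m s) ∧ S.gcd m = 1 ∧
  ∃ e : ℕ, ∀ s : {x // x ∈ S},
    (∑ t : {x // x ∈ S}, partitionMatrix R S ρ s t * (m (t : R) : ℤ)) = (e : ℤ)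

/-- `f` is the equalizing polynomial of `S`. -/
def IsEqualizingPoly [CommRing R] [IsLocalRing R] (S : Finset R) (f : Polynomial R) : Prop :=
  ∃ (ρ : R → ℕ) (m : R → ℕ), IsSPartition R S ρ ∧ IsEqualizingVector R S ρ m ∧
    f = ∏ s ∈ S, (Polynomial.X - Polynomial.C s) ^ m s

/-- The posh set of `f ∈ R[x]`: the set of `r ∈ R` where `v (f r)` exceeds
`min_{t ∈ R} v (f t)`. -/
noncomputable def poshR [CommRing R] [IsLocalRing R] (f : Polynomial R) : Set R :=
  {r : R | (⨅ t : R, vR R (f.eval t)) < vR R (f.eval r)}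

/-- The posh set of `F ∈ K[x]`: the set of `r ∈ R` where `v (F r)` exceeds
`min_{t ∈ R} v (F t)`. -/
def poshK [CommRing R] [IsLocalRing R] [CommRing K] [Algebra R K]
    [IsLocalization (nonZeroDivisors R) K] (F : Polynomial K) : Set R :=
  {r : R | ∃ t : R, vK R K (F.eval (algebraMap R K t)) < vK R K (F.eval (algebraMap R K r))}

/-- `r` lies in an `S`-poor neighborhood of the partition `C_S` (described by `ρ`):
a residue class `r + M ^ (ρ s + 1)` disjoint from `S` inside a block `s + M ^ (ρ s)`. -/
def IsPoorElt [CommRing R] [IsLocalRing R] (S : Finset R) (ρ : R → ℕ) (r : R) : Prop :=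
  ∃ s ∈ S, r ∈ resClass R s (ρ s) ∧ resClass R r (ρ s + 1) ∩ (S : Set R) = ∅

/-- The rich set of `S`: the union of the `S`-rich neighborhoods `s + M ^ (ρ s + 1)`,
`s ∈ S`. -/
def richSet [CommRing R] [IsLocalRing R] (S : Finset R) (ρ : R → ℕ) : Set R :=
  ⋃ s ∈ S, resClass R s (ρ s + 1)

/-- `a` is an `M`-ordering (`P`-ordering) of `R`. -/
def IsMOrdering [CommRing R] [IsLocalRing R] (a : ℕ → R) : Prop :=
  ∀ k : ℕ, ∀ x : R,
    vR R (∏ i ∈ Finset.range k, (a k - a i)) ≤ vR R (∏ i ∈ Finset.range k, (x - a i))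

end Defs

open Polynomial

namespace S4Aux

variable {R : Type*} [CommRing R] [IsDomain R] [IsDiscreteValuationRing R]

/-- junk-valued additive valuation: largest n with π^n ∣ x (junk for x = 0). -/
noncomputable def vv (π x : R) : ℕ := sInf {n : ℕ | ¬ π ^ (n + 1) ∣ x}

variable {π : R} (hπ : Irreducible π)

include hπ

theorem unit_pow_dvd_iff {u x : R} (hu : IsUnit u) {k n : ℕ} (hx : x = u * π ^ n) :
    π ^ k ∣ x ↔ k ≤ n := by
  subst hx
  constructor
  · intro h
    by_contra hk
    push_neg at hk
    have h1 : π ^ (n + 1) ∣ u * π ^ n := dvd_trans (pow_dvd_pow _ hk) h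
    obtain ⟨c, hc⟩ := h1
    obtain ⟨w, hw⟩ := hu
    have key : π ^ n * (u : R) = π ^ n * (π * c) := by
      rw [pow_succ] at hc
      calc π ^ n * u = u * π ^ n := by ring
        _ = π ^ n * π * c := hc
        _ = π ^ n * (π * c) := by ring
    have h2 : (u : R) = π * c := mul_left_cancel₀ (pow_ne_zero n hπ.ne_zero) key
    apply hπ.not_isUnit
    apply IsUnit.of_mul_eq_one (c * ↑w⁻¹)
    have hw1 : (w : R) * (↑w⁻¹ : R) = 1 := w.mul_inv
    calc π * (c * ↑w⁻¹) = (π * c) * ↑w⁻¹ := by ring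
      _ = (w : R) * ↑w⁻¹ := by rw [← h2, ← hw]
      _ = 1 := hw1
  · intro h
    exact Dvd.dvd.mul_left (pow_dvd_pow _ h) u

theorem vv_unit_mul_pow (u : Rˣ) (n : ℕ) : vv π ((u : R) * π ^ n) = n := by
  have hx : ∀ k, π ^ k ∣ (u : R) * π ^ n ↔ k ≤ n := fun k =>
    unit_pow_dvd_iff hπ u.isUnit rfl
  unfold vv
  have hset : {k : ℕ | ¬ π ^ (k + 1) ∣ (u : R) * π ^ n} = {k : ℕ | n ≤ k} := by
    ext k
    simp only [Set.mem_setOf_eq, hx]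
    omega
  rw [hset]
  have hn : n ∈ {k : ℕ | n ≤ k} := le_refl n
  exact le_antisymm (Nat.sInf_le hn) (le_csInf ⟨n, hn⟩ fun b hb => hb)

theorem vv_exists_rep {x : R} (hx : x ≠ 0) : ∃ u : Rˣ, x = (u : R) * π ^ vv π x := by
  obtain ⟨n, u, rfl⟩ := IsDiscreteValuationRing.eq_unit_mul_pow_irreducible hx hπ
  rw [vv_unit_mul_pow hπ]
  exact ⟨u, rfl⟩

theorem vv_pow_dvd_iff {x : R} (hx : x ≠ 0) (k : ℕ) : π ^ k ∣ x ↔ k ≤ vv π x := by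
  obtain ⟨u, hu⟩ := vv_exists_rep hπ hx
  exact unit_pow_dvd_iff hπ u.isUnit hu

theorem vv_mul {x y : R} (hx : x ≠ 0) (hy : y ≠ 0) :
    vv π (x * y) = vv π x + vv π y := by
  obtain ⟨u, hu⟩ := vv_exists_rep hπ hx
  obtain ⟨w, hw⟩ := vv_exists_rep hπ hy
  set a := vv π x with ha
  set b := vv π y with hb
  calc vv π (x * y) = vv π (((u * w : Rˣ) : R) * π ^ (a + b)) := by
        rw [hu, hw]; push_cast; ring_nf
      _ = a + b := vv_unit_mul_pow hπ _ _

theorem vv_unit {x : R} (hx : IsUnit x) : vv π x = 0 := by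
  obtain ⟨u, rfl⟩ := hx
  calc vv π (u : R) = vv π ((u : R) * π ^ 0) := by simp
    _ = 0 := vv_unit_mul_pow hπ _ _

theorem vv_one : vv π (1 : R) = 0 := vv_unit hπ isUnit_one

theorem vv_self : vv π π = 1 := by
  calc vv π π = vv π (((1 : Rˣ) : R) * π ^ 1) := by simp
    _ = 1 := vv_unit_mul_pow hπ _ _

theorem vv_pow {x : R} (hx : x ≠ 0) (n : ℕ) : vv π (x ^ n) = n * vv π x := by
  induction n with
  | zero => simp [vv_one hπ]
  | succ k ih =>
    rw [pow_succ, vv_mul hπ (pow_ne_zero _ hx) hx, ih]; ring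

theorem vv_pow_self (n : ℕ) : vv π (π ^ n) = n := by
  rw [vv_pow hπ hπ.ne_zero n, vv_self hπ, mul_one]

theorem vv_eq_zero_iff {x : R} (hx : x ≠ 0) : vv π x = 0 ↔ IsUnit x := by
  constructor
  · intro h
    obtain ⟨u, hu⟩ := vv_exists_rep hπ hx
    rw [h, pow_zero, mul_one] at hu
    exact hu ▸ u.isUnit
  · exact vv_unit hπ

theorem vv_prod {ι : Type*} (T : Finset ι) (f : ι → R) (hf : ∀ i ∈ T, f i ≠ 0) :
    vv π (∏ i ∈ T, f i) = ∑ i ∈ T, vv π (f i) := by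
  classical
  induction T using Finset.induction with
  | empty => simp [vv_one hπ]
  | insert _ _ hnotmem ih =>
    rename_i a s
    rw [Finset.prod_insert hnotmem, Finset.sum_insert hnotmem,
      vv_mul hπ (hf a (Finset.mem_insert_self a s))
        (Finset.prod_ne_zero_iff.mpr fun i hi => hf i (Finset.mem_insert_of_mem hi)),
      ih fun i hi => hf i (Finset.mem_insert_of_mem hi)]

/-- ultrametric: adding something of strictly bigger valuation doesn't change vv. -/
theorem vv_add_eq {x y : R} (hx : x ≠ 0) (hy : y ≠ 0) (hlt : vv π x < vv π y) :
    x + y ≠ 0 ∧ vv π (x + y) = vv π x := by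
  obtain ⟨u, hu⟩ := vv_exists_rep hπ hx
  obtain ⟨w, hw⟩ := vv_exists_rep hπ hy
  set a := vv π x with ha
  set b := vv π y with hb
  obtain ⟨c, hc, hc1⟩ : ∃ c, b = a + c ∧ 1 ≤ c := ⟨b - a, by omega, by omega⟩
  rw [hc, pow_add] at hw
  have hxy : x + y = ((u : R) + (w : R) * π ^ c) * π ^ a := by
    rw [hu, hw]; ring
  have hdvd : π ∣ (w : R) * π ^ c := by
    have h1 : c = (c - 1) + 1 := by omega
    rw [h1, pow_succ]
    exact ⟨(w : R) * π ^ (c - 1), by ring⟩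
  have hunit : IsUnit ((u : R) + (w : R) * π ^ c) := by
    by_contra hnu
    have hmem : (u : R) + (w : R) * π ^ c ∈ IsLocalRing.maximalIdeal R := hnu
    have hmem2 : (w : R) * π ^ c ∈ IsLocalRing.maximalIdeal R := by
      have hspan : IsLocalRing.maximalIdeal R = Ideal.span {π} :=
        (IsDiscreteValuationRing.irreducible_iff_uniformizer π).mp hπ
      rw [hspan]
      exact Ideal.mem_span_singleton.mpr hdvd
    have hu' : (u : R) ∈ IsLocalRing.maximalIdeal R := by
      have := Ideal.sub_mem _ hmem hmem2
      simpa using this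
    exact hu' u.isUnit
  obtain ⟨u', hu'⟩ := hunit
  constructor
  · rw [hxy, ← hu']
    exact mul_ne_zero (Units.ne_zero u') (pow_ne_zero _ hπ.ne_zero)
  · rw [hxy, ← hu', vv_unit_mul_pow hπ]


section Residue

open IsLocalRing

/-- abbreviation for the residue map -/
noncomputable def rsd (R : Type*) [CommRing R] [IsLocalRing R] :
    R →+* IsLocalRing.ResidueField R := IsLocalRing.residue R

theorem rsd_eq_iff {r s : R} : rsd R r = rsd R s ↔ π ∣ r - s := by
  have hspan : IsLocalRing.maximalIdeal R = Ideal.span {π} :=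
    (IsDiscreteValuationRing.irreducible_iff_uniformizer π).mp hπ
  constructor
  · intro h
    have : r - s ∈ IsLocalRing.maximalIdeal R := Ideal.Quotient.eq.mp h
    rw [hspan] at this
    exact Ideal.mem_span_singleton.mp this
  · intro h
    apply Ideal.Quotient.eq.mpr
    rw [hspan]
    exact Ideal.mem_span_singleton.mpr h

theorem vv_eq_zero_of_rsd_ne {r s : R} (h : rsd R r ≠ rsd R s) :
    r - s ≠ 0 ∧ vv π (r - s) = 0 := by
  have hdvd : ¬ π ∣ r - s := fun hd => h ((rsd_eq_iff hπ).mpr hd)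
  have hne : r - s ≠ 0 := by
    intro h0; exact hdvd (h0 ▸ dvd_zero π)
  refine ⟨hne, ?_⟩
  by_contra h0
  have h1 : 1 ≤ vv π (r - s) := by omega
  exact hdvd (by simpa using (vv_pow_dvd_iff hπ hne 1).mpr h1)

theorem pow_injective : Function.Injective (fun n : ℕ => π ^ n) := by
  intro m n h
  simp only at h
  have hm : vv π (π ^ m) = vv π (π ^ n) := by rw [h]
  rwa [vv_pow_self hπ, vv_pow_self hπ] at hm

theorem infinite_R : Infinite R :=
  Infinite.of_injective _ (pow_injective hπ)

/-- In every residue class there is an element avoiding any given finite set. -/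
theorem exists_avoid (b : IsLocalRing.ResidueField R) (T : Finset R) :
    ∃ r : R, rsd R r = b ∧ r ∉ T := by
  obtain ⟨a, ha⟩ := IsLocalRing.residue_surjective (R := R) b
  have hinj : Function.Injective (fun n : ℕ => a + π ^ (n + 1)) := by
    intro m n h
    simp only [add_right_inj] at h
    have := pow_injective hπ h
    omega
  have hrange : ¬ (Set.range (fun n : ℕ => a + π ^ (n + 1)) ⊆ (T : Set R)) := by
    intro hsub
    exact Set.infinite_range_of_injective hinj (T.finite_toSet.subset hsub)
  rw [Set.not_subset] at hrange
  obtain ⟨x, ⟨n, rfl⟩, hx⟩ := hrange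
  refine ⟨a + π ^ (n + 1), ?_, hx⟩
  have : rsd R (a + π ^ (n + 1)) = rsd R a := by
    apply (rsd_eq_iff hπ).mpr
    simp only [add_sub_cancel_left]
    exact dvd_pow_self π (Nat.succ_ne_zero n)
  rw [this]; exact ha

end Residue

section Dval

/-- weighted valuation sum -/
noncomputable def dval (π : R) (S : Finset R) (μ : R → ℕ) (r : R) : ℕ :=
  ∑ s ∈ S, μ s * vv π (r - s)

/-- the minimum of `dval` over elements outside `S` -/
noncomputable def fmin (π : R) (S : Finset R) (μ : R → ℕ) : ℕ :=
  sInf {n : ℕ | ∃ r, r ∉ S ∧ dval π S μ r = n}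

/-- the minimum of `dval` over elements outside `S` in a fixed residue class -/
noncomputable def cmin (π : R) (S : Finset R) (μ : R → ℕ) (a : R) : ℕ :=
  sInf {n : ℕ | ∃ r, r ∉ S ∧ rsd R r = rsd R a ∧ dval π S μ r = n}

variable (S : Finset R) (μ : R → ℕ)

theorem fmin_spec : ∃ r, r ∉ S ∧ dval π S μ r = fmin π S μ := by
  have hne : {n : ℕ | ∃ r, r ∉ S ∧ dval π S μ r = n}.Nonempty := by
    obtain ⟨r, _, hr⟩ := exists_avoid hπ (rsd R 0) S
    exact ⟨dval π S μ r, r, hr, rfl⟩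
  exact Nat.sInf_mem hne

theorem fmin_le {r : R} (hr : r ∉ S) : fmin π S μ ≤ dval π S μ r :=
  Nat.sInf_le ⟨r, hr, rfl⟩

theorem le_fmin {c : ℕ} (h : ∀ r, r ∉ S → c ≤ dval π S μ r) : c ≤ fmin π S μ := by
  obtain ⟨r, hr, he⟩ := fmin_spec hπ S μ
  exact he ▸ h r hr

theorem cmin_spec (a : R) :
    ∃ r, r ∉ S ∧ rsd R r = rsd R a ∧ dval π S μ r = cmin π S μ a := by
  have hne : {n : ℕ | ∃ r, r ∉ S ∧ rsd R r = rsd R a ∧ dval π S μ r = n}.Nonempty := by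
    obtain ⟨r, hb, hr⟩ := exists_avoid hπ (rsd R a) S
    exact ⟨dval π S μ r, r, hr, hb, rfl⟩
  exact Nat.sInf_mem hne

theorem cmin_le (a : R) {r : R} (hr : r ∉ S) (hb : rsd R r = rsd R a) :
    cmin π S μ a ≤ dval π S μ r :=
  Nat.sInf_le ⟨r, hr, hb, rfl⟩

theorem le_cmin (a : R) {c : ℕ}
    (h : ∀ r, r ∉ S → rsd R r = rsd R a → c ≤ dval π S μ r) : c ≤ cmin π S μ a := by
  obtain ⟨r, hr, hb, he⟩ := cmin_spec hπ S μ a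
  exact he ▸ h r hr hb

theorem fmin_le_cmin (a : R) : fmin π S μ ≤ cmin π S μ a := by
  obtain ⟨r, hr, _, he⟩ := cmin_spec hπ S μ a
  exact he ▸ fmin_le hπ S μ hr

theorem dval_mono {μ ν : R → ℕ} (h : ∀ s ∈ S, μ s ≤ ν s) (r : R) :
    dval π S μ r ≤ dval π S ν r :=
  Finset.sum_le_sum fun s hs => Nat.mul_le_mul_right _ (h s hs)

theorem dval_smul (k : ℕ) (r : R) :
    dval π S (fun s => k * μ s) r = k * dval π S μ r := by
  unfold dval
  rw [Finset.mul_sum]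
  exact Finset.sum_congr rfl fun s _ => by ring

end Dval


section Blocks

open scoped Classical in
/-- division by `π` within the class of `a` -/
noncomputable def tmap (π a s : R) : R := if h : π ∣ (s - a) then h.choose else 0

theorem tmap_spec {a s : R} (h : π ∣ s - a) : s = a + π * tmap π a s := by
  have hts : π * tmap π a s = s - a := by
    unfold tmap
    rw [dif_pos h]
    exact h.choose_spec.symm
  linear_combination -hts

theorem tmap_of_add (a t : R) : tmap π a (a + π * t) = t := by
  have h : π ∣ (a + π * t) - a := ⟨t, by ring⟩
  have h1 := tmap_spec hπ h
  have h2 : π * tmap π a (a + π * t) = π * t := by linear_combination -h1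
  exact mul_left_cancel₀ hπ.ne_zero h2

theorem rsd_shift (a t : R) : rsd R (a + π * t) = rsd R a :=
  (rsd_eq_iff hπ).mpr ⟨t, by ring⟩

open scoped Classical in
/-- the part of `S` in the residue class of `a` -/
noncomputable def blk (S : Finset R) (a : R) : Finset R :=
  S.filter (fun s => rsd R s = rsd R a)

open scoped Classical in
/-- the shifted block `(S ∩ (a + M) - a)/π` -/
noncomputable def tset (π : R) (S : Finset R) (a : R) : Finset R :=
  (blk S a).image (tmap π a)

/-- shift of a multiplicity vector to the block at `a` -/
noncomputable def mshift (π a : R) (μ : R → ℕ) : R → ℕ := fun t => μ (a + π * t)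

omit hπ in
theorem mem_blk {S : Finset R} {a s : R} : s ∈ blk S a ↔ s ∈ S ∧ rsd R s = rsd R a := by
  classical
  simp [blk]

theorem blk_repr {S : Finset R} {a s : R} (h : s ∈ blk S a) :
    s = a + π * tmap π a s :=
  tmap_spec hπ ((rsd_eq_iff hπ).mp ((mem_blk).mp h).2)

theorem tmap_injOn {S : Finset R} {a : R} : Set.InjOn (tmap π a) (blk S a) := by
  intro s hs s' hs' h
  rw [blk_repr hπ hs, blk_repr hπ hs', h]

theorem mem_tset_iff {S : Finset R} {a t : R} : t ∈ tset π S a ↔ (a + π * t) ∈ S := by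
  classical
  constructor
  · intro ht
    unfold tset at ht
    obtain ⟨s, hs, rfl⟩ := Finset.mem_image.mp ht
    rw [← blk_repr hπ hs]
    exact ((mem_blk).mp hs).1
  · intro hS
    have hblk : (a + π * t) ∈ blk S a :=
      (mem_blk).mpr ⟨hS, rsd_shift hπ a t⟩
    unfold tset
    apply Finset.mem_image.mpr
    exact ⟨a + π * t, hblk, tmap_of_add hπ a t⟩

theorem mshift_tmap {S : Finset R} {a s : R} (h : s ∈ blk S a) (μ : R → ℕ) :
    mshift π a μ (tmap π a s) = μ s := by
  unfold mshift
  rw [← blk_repr hπ h]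

theorem dval_decomp {S : Finset R} {a : R} (μ : R → ℕ) {r' : R} (hr' : r' ∉ tset π S a) :
    dval π S μ (a + π * r') =
      (∑ s ∈ blk S a, μ s) + dval π (tset π S a) (mshift π a μ) r' := by
  classical
  unfold dval
  rw [← Finset.sum_filter_add_sum_filter_not S (fun s => rsd R s = rsd R a)]
  have hblk : S.filter (fun s => rsd R s = rsd R a) = blk S a := by
    apply Finset.filter_congr_decidable
  rw [hblk]
  have h2 : ∑ s ∈ S.filter (fun s => ¬ rsd R s = rsd R a), μ s * vv π (a + π * r' - s) = 0 := by
    apply Finset.sum_eq_zero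
    intro s hs
    have hne : rsd R (a + π * r') ≠ rsd R s := by
      rw [rsd_shift hπ a r']
      exact fun h => (Finset.mem_filter.mp hs).2 h.symm
    rw [(vv_eq_zero_of_rsd_ne hπ hne).2, mul_zero]
  rw [h2, add_zero]
  have h1 : ∀ s ∈ blk S a,
      μ s * vv π (a + π * r' - s) = μ s + μ s * vv π (r' - tmap π a s) := by
    intro s hs
    have hsr : a + π * r' - s = π * (r' - tmap π a s) := by
      nth_rewrite 1 [blk_repr hπ hs]; ring
    have hne : r' - tmap π a s ≠ 0 := by
      intro h0
      apply hr'
      have : r' = tmap π a s := by linear_combination h0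
      rw [this]
      unfold tset
      exact Finset.mem_image_of_mem _ hs
    rw [hsr, vv_mul hπ hπ.ne_zero hne, vv_self hπ]
    ring
  rw [Finset.sum_congr rfl h1, Finset.sum_add_distrib]
  congr 1
  unfold tset
  rw [Finset.sum_image (fun s hs s' hs' h => tmap_injOn hπ hs hs' h)]
  exact Finset.sum_congr rfl fun s hs => by rw [mshift_tmap hπ hs]

theorem cmin_eq {S : Finset R} (μ : R → ℕ) (a : R) :
    cmin π S μ a = (∑ s ∈ blk S a, μ s) + fmin π (tset π S a) (mshift π a μ) := by
  apply le_antisymm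
  · obtain ⟨r', hr', he⟩ := fmin_spec hπ (tset π S a) (mshift π a μ)
    have hnotin : (a + π * r') ∉ S := fun h => hr' ((mem_tset_iff hπ).mpr h)
    calc cmin π S μ a ≤ dval π S μ (a + π * r') :=
          cmin_le hπ S μ a hnotin (rsd_shift hπ a r')
      _ = (∑ s ∈ blk S a, μ s) + dval π (tset π S a) (mshift π a μ) r' :=
          dval_decomp hπ μ hr'
      _ = _ := by rw [he]
  · apply le_cmin hπ S μ a
    intro r hr hb
    have hdvd : π ∣ r - a := (rsd_eq_iff hπ).mp hb
    have hrepr : r = a + π * tmap π a r := tmap_spec hπ hdvd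
    have hr'notin : tmap π a r ∉ tset π S a := by
      intro h
      exact hr (by rw [hrepr]; exact (mem_tset_iff hπ).mp h)
    calc (∑ s ∈ blk S a, μ s) + fmin π (tset π S a) (mshift π a μ)
        ≤ (∑ s ∈ blk S a, μ s) + dval π (tset π S a) (mshift π a μ) (tmap π a r) :=
          Nat.add_le_add_left (fmin_le hπ _ _ hr'notin) _
      _ = dval π S μ (a + π * (tmap π a r)) := (dval_decomp hπ μ hr'notin).symm
      _ = dval π S μ r := by rw [← hrepr]

end Blocks


section Core

variable (π) in
/-- The combinatorial consequence of absolute irreducibility. -/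
def GoodProp (S : Finset R) (m : R → ℕ) : Prop :=
  ∀ (N : ℕ) (μ ν : R → ℕ), 1 ≤ N → (∀ s ∈ S, μ s + ν s = N * m s) →
    fmin π S μ + fmin π S ν = N * fmin π S m →
    ∃ t u : ℕ, 0 < u ∧ ∀ s ∈ S, u * μ s = t * m s

variable {S : Finset R} {m : R → ℕ}

theorem fmin_pos (hS : 2 ≤ S.card) (hpos : ∀ s ∈ S, 0 < m s) (hG : GoodProp π S m) :
    fmin π S m ≠ 0 := by
  classical
  intro h0
  obtain ⟨r0, hr0, hd0⟩ := fmin_spec hπ S m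
  rw [h0] at hd0
  have hpos0 : 0 < S.card := by omega
  obtain ⟨s0, hs0⟩ := Finset.card_pos.mp hpos0
  set μ : R → ℕ := fun s => if s = s0 then m s - 1 else m s with hμ
  set ν : R → ℕ := fun s => if s = s0 then 1 else 0 with hν
  have hμm : ∀ s ∈ S, μ s ≤ m s := by
    intro s _; simp only [hμ]; split <;> omega
  have hνm : ∀ s ∈ S, ν s ≤ m s := by
    intro s hs; simp only [hν]; split
    · rename_i h; subst h; exact hpos s hs
    · omega
  have hfμ : fmin π S μ = 0 :=
    Nat.le_zero.mp (le_trans (fmin_le hπ S μ hr0)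
      (le_trans (dval_mono hπ S hμm r0) (le_of_eq hd0)))
  have hfν : fmin π S ν = 0 :=
    Nat.le_zero.mp (le_trans (fmin_le hπ S ν hr0)
      (le_trans (dval_mono hπ S hνm r0) (le_of_eq hd0)))
  obtain ⟨t, u, hu, hp⟩ := hG 1 μ ν le_rfl
    (by intro s hs; simp only [hμ, hν]; split
        · have := hpos s hs; omega
        · omega)
    (by rw [hfμ, hfν, h0])
  obtain ⟨s1, hs1, hne1⟩ := Finset.exists_mem_ne (show 1 < S.card by omega) s0
  have h1 := hp s1 hs1
  simp only [hμ, if_neg hne1] at h1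
  have hut : u = t := Nat.eq_of_mul_eq_mul_right (hpos s1 hs1) h1
  have h2 := hp s0 hs0
  simp only [hμ, if_pos rfl] at h2
  have hm0 := hpos s0 hs0
  have h3 : u * (m s0 - 1) + u = u * m s0 := by
    have : m s0 - 1 + 1 = m s0 := by omega
    calc u * (m s0 - 1) + u = u * ((m s0 - 1) + 1) := by ring
      _ = u * m s0 := by rw [this]
  rw [hut] at h3 h2
  omega

theorem blk_surj (hk : fmin π S m ≠ 0) (b : IsLocalRing.ResidueField R) :
    ∃ s ∈ S, rsd R s = b := by
  by_contra hno
  push_neg at hno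
  obtain ⟨a, hab, haS⟩ := exists_avoid hπ b S
  have hd : dval π S m a = 0 := by
    apply Finset.sum_eq_zero
    intro s hs
    have hne : rsd R a ≠ rsd R s := by
      rw [hab]; exact fun h => hno s hs h.symm
    rw [(vv_eq_zero_of_rsd_ne hπ hne).2, mul_zero]
  exact hk (Nat.le_zero.mp (hd ▸ fmin_le hπ S m haS))

theorem cmin_eq_fmin (hS : 2 ≤ S.card) (hpos : ∀ s ∈ S, 0 < m s) (hG : GoodProp π S m)
    (a : R) : cmin π S m a = fmin π S m := by
  classical
  set k := fmin π S m with hk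
  have hk1 : 1 ≤ k := Nat.one_le_iff_ne_zero.mpr (fmin_pos hπ hS hpos hG)
  by_contra hne
  have hlt : k < cmin π S m a := lt_of_le_of_ne (fmin_le_cmin hπ S m a) (Ne.symm hne)
  set N := cmin π S m a with hN
  have hN1 : 2 ≤ N := by omega
  set μ : R → ℕ := fun s => if rsd R s = rsd R a then (N - 1) * m s else N * m s with hμ
  set ν : R → ℕ := fun s => if rsd R s = rsd R a then m s else 0 with hν
  -- fmin ν = 0
  obtain ⟨b', hb'⟩ := exists_ne (rsd R a)
  obtain ⟨r1, hr1b, hr1S⟩ := exists_avoid hπ b' S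
  have hfν : fmin π S ν = 0 := by
    apply Nat.le_zero.mp
    refine le_trans (fmin_le hπ S ν hr1S) (le_of_eq ?_)
    apply Finset.sum_eq_zero
    intro s hs
    simp only [hν]
    split
    · rename_i h
      have hne2 : rsd R r1 ≠ rsd R s := by rw [hr1b, h]; exact hb'
      rw [(vv_eq_zero_of_rsd_ne hπ hne2).2, mul_zero]
    · rw [zero_mul]
  -- fmin μ = N * k
  obtain ⟨r0, hr0S, hr0d⟩ := fmin_spec hπ S m
  have hr0b : rsd R r0 ≠ rsd R a := by
    intro h
    have := cmin_le hπ S m a hr0S h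
    rw [hr0d] at this
    omega
  have hclass0 : ∀ r : R, rsd R r ≠ rsd R a → dval π S μ r = N * dval π S m r := by
    intro r hr
    rw [← dval_smul hπ S m N r]
    apply Finset.sum_congr rfl
    intro s hs
    simp only [hμ]
    split
    · rename_i h
      have hne2 : rsd R r ≠ rsd R s := by rw [h]; exact hr
      rw [(vv_eq_zero_of_rsd_ne hπ hne2).2, mul_zero, mul_zero]
    · rfl
  have hfμ : fmin π S μ = N * k := by
    apply le_antisymm
    · refine le_trans (fmin_le hπ S μ hr0S) ?_
      rw [hclass0 r0 hr0b, hr0d]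
    · apply le_fmin hπ S μ
      intro r hrS
      by_cases hrb : rsd R r = rsd R a
      · have h1 : ∀ s ∈ S, (N - 1) * m s ≤ μ s := by
          intro s _
          simp only [hμ]
          split
          · exact le_rfl
          · exact Nat.mul_le_mul_right _ (by omega)
        have h2 : (N - 1) * dval π S m r ≤ dval π S μ r := by
          rw [← dval_smul hπ S m (N - 1) r]
          exact dval_mono hπ S h1 r
        have h3 : N ≤ dval π S m r := cmin_le hπ S m a hrS hrb
        have h4 : N * k ≤ (N - 1) * N := by
          have : (N - 1) * N = N * (N - 1) := by ring
          rw [this]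
          exact Nat.mul_le_mul_left N (by omega)
        calc N * k ≤ (N - 1) * N := h4
          _ ≤ (N - 1) * dval π S m r := Nat.mul_le_mul_left _ h3
          _ ≤ dval π S μ r := h2
      · rw [hclass0 r hrb]
        exact Nat.mul_le_mul_left N (fmin_le hπ S m hrS)
  obtain ⟨t, u, hu, hp⟩ := hG N μ ν (by omega)
    (by intro s hs
        simp only [hμ, hν]
        split
        · have : N - 1 + 1 = N := by omega
          calc (N - 1) * m s + m s = ((N - 1) + 1) * m s := by ring
            _ = N * m s := by rw [this]
        · omega)
    (by rw [hfμ, hfν, ← hk]; omega)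
  obtain ⟨s1, hs1S, hs1b⟩ := blk_surj hπ (by omega : fmin π S m ≠ 0) (rsd R a)
  obtain ⟨s2, hs2S, hs2b⟩ := blk_surj hπ (by omega : fmin π S m ≠ 0) b'
  have h1 := hp s1 hs1S
  have h2 := hp s2 hs2S
  simp only [hμ, if_pos hs1b] at h1
  have hs2ne : ¬ rsd R s2 = rsd R a := by rw [hs2b]; exact hb'
  simp only [hμ, if_neg hs2ne] at h2
  have e1 : (u * (N - 1)) * m s1 = t * m s1 := by rw [← h1]; ring
  have e2 : (u * N) * m s2 = t * m s2 := by rw [← h2]; ring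
  have e1' : u * (N - 1) = t := Nat.eq_of_mul_eq_mul_right (hpos s1 hs1S) e1
  have e2' : u * N = t := Nat.eq_of_mul_eq_mul_right (hpos s2 hs2S) e2
  have e3 : u * (N - 1) + u = u * N := by
    have : N - 1 + 1 = N := by omega
    calc u * (N - 1) + u = u * ((N - 1) + 1) := by ring
      _ = u * N := by rw [this]
  omega

theorem good_tset (hS : 2 ≤ S.card) (hpos : ∀ s ∈ S, 0 < m s) (hG : GoodProp π S m)
    (a : R) : GoodProp π (tset π S a) (mshift π a m) := by
  classical
  intro n ν1 ν2 hn hsum12 heq12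
  set Ta := tset π S a with hTa
  set mA := mshift π a m with hmA
  set k := fmin π S m with hk
  have hk1 : 1 ≤ k := Nat.one_le_iff_ne_zero.mpr (fmin_pos hπ hS hpos hG)
  have hkey : k = (∑ s ∈ blk S a, m s) + fmin π Ta mA := by
    rw [hk, ← cmin_eq_fmin hπ hS hpos hG a, cmin_eq hπ m a]
  set t1 := (∑ t ∈ Ta, ν1 t) + fmin π Ta ν1 with ht1
  set t2 := (∑ t ∈ Ta, ν2 t) + fmin π Ta ν2 with ht2
  have hsum_blk : ∀ μ0 : R → ℕ, ∑ t ∈ Ta, mshift π a μ0 t = ∑ s ∈ blk S a, μ0 s := by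
    intro μ0
    rw [hTa]
    unfold tset
    rw [Finset.sum_image (fun x hx y hy h => tmap_injOn hπ hx hy h)]
    exact Finset.sum_congr rfl fun s hs => by rw [mshift_tmap hπ hs]
  have ht12 : t1 + t2 = n * k := by
    have hA : (∑ t ∈ Ta, ν1 t) + (∑ t ∈ Ta, ν2 t) = n * ∑ s ∈ blk S a, m s := by
      rw [← Finset.sum_add_distrib]
      rw [Finset.sum_congr rfl (fun t ht => hsum12 t ht)]
      rw [← Finset.mul_sum, hsum_blk m]
    rw [ht1, ht2, hkey, Nat.mul_add]
    omega
  set N := k * n with hNdef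
  set μ : R → ℕ := fun s => if rsd R s = rsd R a then k * ν1 (tmap π a s) else t1 * m s with hμ
  set ν : R → ℕ := fun s => if rsd R s = rsd R a then k * ν2 (tmap π a s) else t2 * m s with hν
  -- dval decompositions for μ (and by symmetry ν)
  have hfgen : ∀ (w : R → ℕ) (tw : ℕ) (ω : R → ℕ),
      (∀ s ∈ S, ω s = if rsd R s = rsd R a then k * w (tmap π a s) else tw * m s) →
      tw = (∑ t ∈ Ta, w t) + fmin π Ta w →
      fmin π S ω = k * tw := by
    intro w tw ω hω htw
    have hshift : ∀ r' : R, r' ∉ Ta → dval π Ta (mshift π a ω) r' = k * dval π Ta w r' := by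
      intro r' _
      rw [← dval_smul hπ Ta w k r']
      apply Finset.sum_congr rfl
      intro t ht
      have hmem : (a + π * t) ∈ S := (mem_tset_iff hπ).mp ht
      have : mshift π a ω t = k * w t := by
        unfold mshift
        rw [hω _ hmem, if_pos (rsd_shift hπ a t), tmap_of_add hπ a t]
      rw [this]
    have hblkω : ∑ s ∈ blk S a, ω s = k * ∑ t ∈ Ta, w t := by
      rw [← hsum_blk ω]
      rw [Finset.mul_sum]
      apply Finset.sum_congr rfl
      intro t ht
      have hmem : (a + π * t) ∈ S := (mem_tset_iff hπ).mp ht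
      unfold mshift
      rw [hω _ hmem, if_pos (rsd_shift hπ a t), tmap_of_add hπ a t]
    apply le_antisymm
    · obtain ⟨r1', hr1', hd1'⟩ := fmin_spec hπ Ta w
      have hnotS : (a + π * r1') ∉ S := fun h => hr1' ((mem_tset_iff hπ).mpr h)
      refine le_trans (fmin_le hπ S ω hnotS) ?_
      rw [dval_decomp hπ ω hr1', hshift r1' hr1', hd1', hblkω, htw]
      ring_nf
      omega
    · apply le_fmin hπ S ω
      intro r hrS
      by_cases hrb : rsd R r = rsd R a
      · have hdvd : π ∣ r - a := (rsd_eq_iff hπ).mp hrb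
        have hrepr : r = a + π * tmap π a r := tmap_spec hπ hdvd
        have hr'notin : tmap π a r ∉ Ta := by
          intro h
          exact hrS (by rw [hrepr]; exact (mem_tset_iff hπ).mp h)
        have : dval π S ω r = (∑ s ∈ blk S a, ω s) + dval π Ta (mshift π a ω) (tmap π a r) := by
          nth_rewrite 1 [hrepr]
          exact dval_decomp hπ ω hr'notin
        rw [this, hshift _ hr'notin, hblkω, htw]
        have := fmin_le hπ Ta w hr'notin
        have hh : fmin π Ta w ≤ dval π Ta w (tmap π a r) := this
        calc k * ((∑ t ∈ Ta, w t) + fmin π Ta w)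
            ≤ k * ((∑ t ∈ Ta, w t) + dval π Ta w (tmap π a r)) :=
              Nat.mul_le_mul_left k (by omega)
          _ = k * (∑ t ∈ Ta, w t) + k * dval π Ta w (tmap π a r) := by ring
      · have hclass : dval π S ω r = tw * dval π S m r := by
          rw [← dval_smul hπ S m tw r]
          apply Finset.sum_congr rfl
          intro s hs
          rw [hω s hs]
          split
          · rename_i h
            have hne2 : rsd R r ≠ rsd R s := by rw [h]; exact hrb
            rw [(vv_eq_zero_of_rsd_ne hπ hne2).2, mul_zero, mul_zero]
          · rfl
        rw [hclass]
        calc k * tw = tw * k := by ring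
          _ ≤ tw * dval π S m r := Nat.mul_le_mul_left tw (fmin_le hπ S m hrS)
  have hfμ : fmin π S μ = k * t1 := hfgen ν1 t1 μ (fun s _ => rfl) ht1
  have hfν : fmin π S ν = k * t2 := hfgen ν2 t2 ν (fun s _ => rfl) ht2
  obtain ⟨t, u, hu, hp⟩ := hG N μ ν (by
      have : 1 ≤ k * n := Nat.mul_le_mul hk1 hn
      omega)
    (by intro s hs
        simp only [hμ, hν]
        by_cases hsb : rsd R s = rsd R a
        · rw [if_pos hsb, if_pos hsb]
          have hsblk : s ∈ blk S a := mem_blk.mpr ⟨hs, hsb⟩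
          have htmem : tmap π a s ∈ Ta := by
            rw [hTa]; unfold tset; exact Finset.mem_image_of_mem _ hsblk
          have h12 := hsum12 (tmap π a s) htmem
          have hms : mA (tmap π a s) = m s := mshift_tmap hπ hsblk m
          rw [hms] at h12
          calc k * ν1 (tmap π a s) + k * ν2 (tmap π a s)
              = k * (ν1 (tmap π a s) + ν2 (tmap π a s)) := by ring
            _ = k * (n * m s) := by rw [h12]
            _ = N * m s := by rw [hNdef]; ring
        · rw [if_neg hsb, if_neg hsb]
          calc t1 * m s + t2 * m s = (t1 + t2) * m s := by ring
            _ = (n * k) * m s := by rw [ht12]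
            _ = N * m s := by rw [hNdef]; ring)
    (by rw [hfμ, hfν, ← hk, hNdef]
        calc k * t1 + k * t2 = k * (t1 + t2) := by ring
          _ = k * (n * k) := by rw [ht12]
          _ = k * n * k := by ring)
  -- extract proportionality for ν1
  have hk0 : fmin π S m ≠ 0 := by omega
  obtain ⟨b', hb'⟩ := exists_ne (rsd R a)
  obtain ⟨s2, hs2S, hs2b⟩ := blk_surj hπ hk0 b'
  have hs2ne : ¬ rsd R s2 = rsd R a := by rw [hs2b]; exact hb'
  have h2 := hp s2 hs2S
  simp only [hμ, if_neg hs2ne] at h2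
  have e2 : (u * t1) * m s2 = t * m s2 := by rw [← h2]; ring
  have hut1 : u * t1 = t := Nat.eq_of_mul_eq_mul_right (hpos s2 hs2S) e2
  refine ⟨t, u * k, Nat.mul_pos hu (by omega), ?_⟩
  intro t'' ht''
  rw [hTa] at ht''
  unfold tset at ht''
  obtain ⟨s, hsblk, rfl⟩ := Finset.mem_image.mp ht''
  have hsS : s ∈ S := (mem_blk.mp hsblk).1
  have hsb : rsd R s = rsd R a := (mem_blk.mp hsblk).2
  have h1 := hp s hsS
  simp only [hμ, if_pos hsb] at h1
  have hms : mA (tmap π a s) = m s := mshift_tmap hπ hsblk m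
  rw [hms]
  calc (u * k) * ν1 (tmap π a s) = u * (k * ν1 (tmap π a s)) := by ring
    _ = t * m s := h1

end Core


section Counting

omit hπ in
theorem sum_modeq {β : Type*} (T : Finset β) (f : β → ℕ) (n : ℕ)
    (h : ∀ b ∈ T, f b ≡ 1 [MOD n]) : (∑ b ∈ T, f b) ≡ T.card [MOD n] := by
  classical
  induction T using Finset.induction with
  | empty => simp; rfl
  | insert _ _ hni ih =>
    rename_i a T'
    rw [Finset.sum_insert hni, Finset.card_insert_of_notMem hni]
    have h1 : T'.card + 1 = 1 + T'.card := by omega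
    rw [h1]
    exact Nat.ModEq.add (h a (Finset.mem_insert_self a T'))
      (ih fun b hb => h b (Finset.mem_insert_of_mem hb))

theorem core [Finite (IsLocalRing.ResidueField R)] :
    ∀ (nn : ℕ) (S : Finset R), S.card ≤ nn → S.Nonempty →
    ∀ m : R → ℕ, (∀ s ∈ S, 0 < m s) → GoodProp π S m →
    S.card ≡ 1 [MOD Nat.card (IsLocalRing.ResidueField R) - 1] := by
  intro nn
  induction nn with
  | zero =>
    intro S hle hne m _ _
    have := hne.card_pos
    omega
  | succ nn ih =>
    intro S hle hne m hpos hG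
    classical
    by_cases h1 : S.card = 1
    · rw [h1]
    have hS : 2 ≤ S.card := by have := hne.card_pos; omega
    letI : Fintype (IsLocalRing.ResidueField R) := Fintype.ofFinite _
    set q := Nat.card (IsLocalRing.ResidueField R) with hq
    have hk0 : fmin π S m ≠ 0 := fmin_pos hπ hS hpos hG
    have hfib : S.card = ∑ b ∈ (Finset.univ : Finset (IsLocalRing.ResidueField R)),
        (S.filter fun s => rsd R s = b).card :=
      Finset.card_eq_sum_card_fiberwise (fun s _ => Finset.mem_univ _)
    have hblock : ∀ b : IsLocalRing.ResidueField R,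
        (S.filter fun s => rsd R s = b).card ≡ 1 [MOD q - 1] := by
      intro b
      obtain ⟨a, ha⟩ := IsLocalRing.residue_surjective (R := R) b
      have ha' : rsd R a = b := ha
      have hfilter : S.filter (fun s => rsd R s = b) = blk S a := by
        unfold blk
        ext s
        simp only [Finset.mem_filter, ha']
      have hcard2 : (tset π S a).card = (blk S a).card := by
        unfold tset
        exact Finset.card_image_of_injOn (tmap_injOn hπ)
      obtain ⟨b2, hb2⟩ := exists_ne b
      obtain ⟨s2, hs2S, hs2b⟩ := blk_surj hπ hk0 b2
      have hs2notb : s2 ∉ blk S a := by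
        intro hmem
        have := (mem_blk.mp hmem).2
        rw [hs2b, ha'] at this
        exact hb2 this
      have hssub : blk S a ⊆ S := by
        unfold blk
        exact Finset.filter_subset _ _
      have hlt : (blk S a).card < S.card :=
        Finset.card_lt_card ((Finset.ssubset_iff_of_subset hssub).mpr ⟨s2, hs2S, hs2notb⟩)
      obtain ⟨s1, hs1S, hs1b⟩ := blk_surj hπ hk0 b
      have hs1blk : s1 ∈ blk S a := mem_blk.mpr ⟨hs1S, by rw [hs1b, ha']⟩
      have htne : (tset π S a).Nonempty := by
        refine ⟨tmap π a s1, ?_⟩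
        unfold tset
        exact Finset.mem_image_of_mem _ hs1blk
      have hmpos : ∀ t ∈ tset π S a, 0 < mshift π a m t := by
        intro t ht
        have := (mem_tset_iff hπ).mp ht
        unfold mshift
        exact hpos _ this
      have hres := ih (tset π S a) (by omega) htne (mshift π a m) hmpos
        (good_tset hπ hS hpos hG a)
      rw [hfilter, ← hcard2]
      exact hres
    have hq1 : 1 ≤ q := Nat.card_pos
    have hstep : S.card ≡ q [MOD q - 1] := by
      have h2 := sum_modeq (Finset.univ : Finset (IsLocalRing.ResidueField R))
        (fun b => (S.filter fun s => rsd R s = b).card) (q - 1) (fun b _ => hblock b)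
      rw [← hfib] at h2
      have h3 : (Finset.univ : Finset (IsLocalRing.ResidueField R)).card = q := by
        rw [hq, Nat.card_eq_fintype_card]
        rfl
      rw [h3] at h2
      exact h2
    have hfin : q ≡ 1 [MOD q - 1] :=
      ((Nat.modEq_iff_dvd' hq1).mpr dvd_rfl).symm
    exact hstep.trans hfin

end Counting

section KBridge

variable {K : Type*} [Field K] [Algebra R K] [IsFractionRing R K]

omit hπ in
theorem inj_i : Function.Injective (algebraMap R K) := IsFractionRing.injective R K

theorem iπ_ne_zero : (algebraMap R K) π ≠ 0 := fun h =>
  hπ.ne_zero (inj_i (by rw [h, map_zero]))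

theorem knf {x : K} (hx : x ≠ 0) :
    ∃ (u : Rˣ) (z : ℤ), x = algebraMap R K (u : R) * (algebraMap R K π) ^ z := by
  obtain ⟨p, q, hq, hpq⟩ := IsFractionRing.div_surjective (A := R) x
  have hq0 : q ≠ 0 := nonZeroDivisors.ne_zero hq
  have hp0 : p ≠ 0 := by
    intro h
    rw [h, map_zero, zero_div] at hpq
    exact hx hpq.symm
  obtain ⟨np, up, hup⟩ := IsDiscreteValuationRing.eq_unit_mul_pow_irreducible hp0 hπ
  obtain ⟨nq, uq, huq⟩ := IsDiscreteValuationRing.eq_unit_mul_pow_irreducible hq0 hπ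
  refine ⟨up * uq⁻¹, (np : ℤ) - (nq : ℤ), ?_⟩
  have hiq : algebraMap R K (uq : R) ≠ 0 := fun h =>
    uq.ne_zero (inj_i (by rw [h, map_zero]))
  rw [← hpq, hup, huq]
  rw [map_mul, map_mul, map_pow, map_pow]
  rw [zpow_sub₀ (iπ_ne_zero hπ), zpow_natCast, zpow_natCast]
  have huq' : algebraMap R K ((uq⁻¹ : Rˣ) : R) = (algebraMap R K (uq : R))⁻¹ := by
    apply eq_inv_of_mul_eq_one_left
    rw [← map_mul]
    norm_cast
    simp
  push_cast [map_mul]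
  rw [huq']
  field_simp

theorem mem_range_iff (u : Rˣ) (z : ℤ) {w : R} (hw : w ≠ 0) :
    (∃ a : R, algebraMap R K (u : R) * (algebraMap R K π) ^ z * algebraMap R K w
      = algebraMap R K a) ↔ 0 ≤ z + (vv π w : ℤ) := by
  by_cases hz : 0 ≤ z
  · constructor
    · intro _; omega
    · intro _
      lift z to ℕ using hz
      refine ⟨(u : R) * π ^ z * w, ?_⟩
      rw [map_mul, map_mul, map_pow, zpow_natCast]
  · push_neg at hz
    set n : ℕ := (-z).toNat with hn
    have hzn : z + (n : ℤ) = 0 := by omega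
    have hkey : ∀ a : R, (algebraMap R K (u : R) * (algebraMap R K π) ^ z * algebraMap R K w
        = algebraMap R K a) ↔ (u : R) * w = a * π ^ n := by
      intro a
      constructor
      · intro h
        apply inj_i (K := K)
        have h3 : algebraMap R K (u : R) * (algebraMap R K π) ^ z * algebraMap R K w *
            (algebraMap R K π) ^ (n : ℤ) = algebraMap R K a * (algebraMap R K π) ^ (n : ℤ) := by
          rw [h]
        have h4 : (algebraMap R K π) ^ z * (algebraMap R K π) ^ (n : ℤ) = 1 := by
          rw [← zpow_add₀ (iπ_ne_zero hπ (K := K)), hzn, zpow_zero]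
        have h5 : algebraMap R K (u : R) * algebraMap R K w
            = algebraMap R K a * (algebraMap R K π) ^ (n : ℤ) := by
          rw [← h3, show algebraMap R K (u : R) * (algebraMap R K π) ^ z * algebraMap R K w *
            (algebraMap R K π) ^ (n : ℤ) = algebraMap R K (u : R) * algebraMap R K w *
            ((algebraMap R K π) ^ z * (algebraMap R K π) ^ (n : ℤ)) from by ring, h4, mul_one]
        rw [map_mul, map_mul, map_pow]
        rw [← zpow_natCast ((algebraMap R K) π) n]
        exact h5
      · intro h
        have h2 : algebraMap R K ((u : R) * w) = algebraMap R K (a * π ^ n) := by rw [h]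
        rw [map_mul, map_mul, map_pow] at h2
        calc algebraMap R K (u : R) * (algebraMap R K π) ^ z * algebraMap R K w
            = algebraMap R K (u : R) * algebraMap R K w * (algebraMap R K π) ^ z := by ring
          _ = algebraMap R K a * (algebraMap R K π) ^ n * (algebraMap R K π) ^ z := by rw [h2]
          _ = algebraMap R K a * ((algebraMap R K π) ^ (n : ℤ) * (algebraMap R K π) ^ z) := by
              rw [zpow_natCast]; ring
          _ = algebraMap R K a := by
              rw [← zpow_add₀ (iπ_ne_zero hπ (K := K)), add_comm, hzn, zpow_zero, mul_one]
    constructor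
    · intro ⟨a, ha⟩
      have h := (hkey a).mp ha
      have hdvd : π ^ n ∣ w := by
        refine ⟨((u⁻¹ : Rˣ) : R) * a, ?_⟩
        calc w = ((u⁻¹ : Rˣ) : R) * ((u : R) * w) := by
              rw [← mul_assoc]; norm_cast; simp
          _ = ((u⁻¹ : Rˣ) : R) * (a * π ^ n) := by rw [h]
          _ = π ^ n * (((u⁻¹ : Rˣ) : R) * a) := by ring
      have := (vv_pow_dvd_iff hπ hw n).mp hdvd
      omega
    · intro hge
      have hnv : n ≤ vv π w := by omega
      obtain ⟨w', hw'⟩ := (vv_pow_dvd_iff hπ hw n).mpr hnv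
      refine ⟨(u : R) * w', ?_⟩
      apply (hkey _).mpr
      rw [hw']; ring

variable (K) in
/-- canonical split polynomial with constant `u·π^z` and multiplicities `μ` -/
noncomputable def gp (π : R) (S : Finset R) (u : Rˣ) (z : ℤ) (μ : R → ℕ) : Polynomial K :=
  Polynomial.C (algebraMap R K (u : R) * (algebraMap R K π) ^ z) *
    ∏ s ∈ S, (Polynomial.X - Polynomial.C (algebraMap R K s)) ^ (μ s)

omit hπ in
theorem gp_eval (S : Finset R) (u : Rˣ) (z : ℤ) (μ : R → ℕ) (r : R) :
    (gp K π S u z μ).eval (algebraMap R K r) =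
      algebraMap R K (u : R) * (algebraMap R K π) ^ z *
        algebraMap R K (∏ s ∈ S, (r - s) ^ (μ s)) := by
  unfold gp
  rw [Polynomial.eval_mul, Polynomial.eval_C, Polynomial.eval_prod, map_prod]
  congr 1
  apply Finset.prod_congr rfl
  intro s _
  rw [Polynomial.eval_pow, Polynomial.eval_sub, Polynomial.eval_X, Polynomial.eval_C,
    map_pow, map_sub]

theorem prod_vv (S : Finset R) {μ : R → ℕ} {r : R} (h : ∀ s ∈ S, μ s = 0 ∨ r ≠ s) :
    (∏ s ∈ S, (r - s) ^ (μ s)) ≠ 0 ∧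
      vv π (∏ s ∈ S, (r - s) ^ (μ s)) = dval π S μ r := by
  have hfac : ∀ s ∈ S, (r - s) ^ (μ s) ≠ 0 := by
    intro s hs
    rcases h s hs with h0 | hne
    · rw [h0, pow_zero]; exact one_ne_zero
    · exact pow_ne_zero _ (sub_ne_zero.mpr hne)
  refine ⟨Finset.prod_ne_zero_iff.mpr hfac, ?_⟩
  rw [vv_prod hπ S _ hfac]
  apply Finset.sum_congr rfl
  intro s hs
  rcases h s hs with h0 | hne
  · rw [h0, pow_zero, vv_one hπ, zero_mul]
  · rw [vv_pow hπ (sub_ne_zero.mpr hne)]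

theorem dval_ge_fmin (S : Finset R) {μ : R → ℕ} {r : R} (h : ∀ s ∈ S, μ s = 0 ∨ r ≠ s) :
    fmin π S μ ≤ dval π S μ r := by
  classical
  by_cases hr : r ∈ S
  · have hμr : μ r = 0 := by
      rcases h r hr with h0 | hne
      · exact h0
      · exact absurd rfl hne
    set T := 1 + (S.erase r).sup (fun t => vv π (r - t)) with hT
    have hclaim : ∀ s ∈ S, s ≠ r → (r + π ^ T - s ≠ 0 ∧ vv π (r + π ^ T - s) = vv π (r - s)) := by
      intro s hs hne
      have hrs : r - s ≠ 0 := sub_ne_zero.mpr (Ne.symm hne)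
      have hlt : vv π (r - s) < T := by
        have : vv π (r - s) ≤ (S.erase r).sup (fun t => vv π (r - t)) :=
          Finset.le_sup (f := fun t => vv π (r - t)) (Finset.mem_erase.mpr ⟨hne, hs⟩)
        omega
      have heq : r + π ^ T - s = (r - s) + π ^ T := by ring
      rw [heq]
      have := vv_add_eq hπ hrs (pow_ne_zero T hπ.ne_zero)
        (by rw [vv_pow_self hπ]; exact hlt)
      exact this
    have hr'S : r + π ^ T ∉ S := by
      intro h'
      by_cases he : r + π ^ T = r
      · have : π ^ T = 0 := by linear_combination he
        exact pow_ne_zero T hπ.ne_zero this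
      · exact (hclaim _ h' (fun hh => he (by rw [hh]))).1 (by ring)
    have hdeq : dval π S μ (r + π ^ T) = dval π S μ r := by
      apply Finset.sum_congr rfl
      intro s hs
      by_cases he : s = r
      · rw [he, hμr, zero_mul, zero_mul]
      · rw [(hclaim s hs he).2]
    rw [← hdeq]
    exact fmin_le hπ S μ hr'S
  · exact fmin_le hπ S μ hr

theorem gp_mem_iff (S : Finset R) (u : Rˣ) (z : ℤ) (μ : R → ℕ) :
    (gp K π S u z μ ∈ intPoly R K) ↔ 0 ≤ z + (fmin π S μ : ℤ) := by
  constructor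
  · intro hmem
    obtain ⟨r0, hr0, hd0⟩ := fmin_spec hπ S μ
    obtain ⟨a, ha⟩ := hmem r0
    rw [gp_eval] at ha
    have hcond : ∀ s ∈ S, μ s = 0 ∨ r0 ≠ s := fun s hs => Or.inr (fun he => hr0 (he ▸ hs))
    obtain ⟨hP0, hPv⟩ := prod_vv hπ S hcond
    have := (mem_range_iff hπ u z hP0).mp ⟨a, ha⟩
    rw [hPv, hd0] at this
    exact this
  · intro hz r
    by_cases hcond : ∀ s ∈ S, μ s = 0 ∨ r ≠ s
    · obtain ⟨hP0, hPv⟩ := prod_vv hπ S hcond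
      have h1 : 0 ≤ z + (vv π (∏ s ∈ S, (r - s) ^ (μ s)) : ℤ) := by
        rw [hPv]
        have := dval_ge_fmin hπ S hcond
        omega
      obtain ⟨a, ha⟩ := (mem_range_iff (K := K) hπ u z hP0).mpr h1
      exact ⟨a, by rw [gp_eval]; exact ha⟩
    · push_neg at hcond
      obtain ⟨s0, hs0, hμ0, hrs⟩ := hcond
      refine ⟨0, ?_⟩
      rw [gp_eval, map_zero, mul_eq_zero]
      right
      rw [map_eq_zero_iff _ (inj_i (K := K))]
      apply Finset.prod_eq_zero hs0
      rw [hrs, sub_self]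
      exact zero_pow hμ0

theorem gp_mul (S : Finset R) (u u' : Rˣ) (z z' : ℤ) (μ ν : R → ℕ) :
    gp K π S u z μ * gp K π S u' z' ν = gp K π S (u * u') (z + z') (fun s => μ s + ν s) := by
  unfold gp
  rw [mul_mul_mul_comm, ← map_mul, ← Finset.prod_mul_distrib]
  congr 1
  · congr 1
    rw [zpow_add₀ (iπ_ne_zero hπ (K := K))]
    push_cast [map_mul]
    ring
  · apply Finset.prod_congr rfl
    intro s _
    rw [pow_add]

theorem gp_pow (S : Finset R) (u : Rˣ) (z : ℤ) (μ : R → ℕ) (N : ℕ) :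
    (gp K π S u z μ) ^ N = gp K π S (u ^ N) ((N : ℤ) * z) (fun s => N * μ s) := by
  induction N with
  | zero =>
    simp only [pow_zero, zero_mul, Nat.cast_zero, zero_mul]
    unfold gp
    simp
  | succ N ih =>
    rw [pow_succ, ih, gp_mul hπ]
    congr 1
    · rw [pow_succ]
    · push_cast; ring
    · funext s; ring

omit hπ in
theorem gp_congr (S : Finset R) (u : Rˣ) (z : ℤ) {μ ν : R → ℕ} (h : ∀ s ∈ S, μ s = ν s) :
    gp K π S u z μ = gp K π S u z ν := by
  unfold gp
  congr 1
  exact Finset.prod_congr rfl fun s hs => by rw [h s hs]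

theorem gp_ne_zero (S : Finset R) (u : Rˣ) (z : ℤ) (μ : R → ℕ) : gp K π S u z μ ≠ 0 := by
  unfold gp
  apply mul_ne_zero
  · rw [Polynomial.C_ne_zero]
    apply mul_ne_zero
    · exact fun h => u.ne_zero (inj_i (by rw [h, map_zero]))
    · exact zpow_ne_zero z (iπ_ne_zero hπ)
  · apply Finset.prod_ne_zero_iff.mpr
    intro s _
    exact pow_ne_zero _ (Polynomial.X_sub_C_ne_zero _)

theorem gp_natDegree (S : Finset R) (u : Rˣ) (z : ℤ) (μ : R → ℕ) :
    (gp K π S u z μ).natDegree = ∑ s ∈ S, μ s := by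
  unfold gp
  rw [Polynomial.natDegree_mul (by
      rw [Polynomial.C_ne_zero]
      exact mul_ne_zero (fun h => u.ne_zero (inj_i (by rw [h, map_zero])))
        (zpow_ne_zero z (iπ_ne_zero hπ)))
    (Finset.prod_ne_zero_iff.mpr fun s _ => pow_ne_zero _ (Polynomial.X_sub_C_ne_zero _))]
  rw [Polynomial.natDegree_C, zero_add,
    Polynomial.natDegree_prod _ _ (fun s _ => pow_ne_zero _ (Polynomial.X_sub_C_ne_zero _))]
  apply Finset.sum_congr rfl
  intro s _
  rw [Polynomial.natDegree_pow, Polynomial.natDegree_X_sub_C, mul_one]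

end KBridge

section Atomic

variable {K : Type*} [Field K] [Algebra R K] [IsFractionRing R K]

omit hπ in
theorem int_unit_const {G : intPoly R K} (hU : IsUnit G) :
    ∃ w : Rˣ, (G : Polynomial K) = Polynomial.C (algebraMap R K (w : R)) := by
  obtain ⟨U, hUG⟩ := hU
  set V : intPoly R K := ((U⁻¹ : (intPoly R K)ˣ) : intPoly R K) with hV
  have hmul : (G : Polynomial K) * (V : Polynomial K) = 1 := by
    have h1 : ((U : intPoly R K) * V : intPoly R K) = 1 := by
      rw [hV]; exact_mod_cast U.mul_inv
    calc (G : Polynomial K) * (V : Polynomial K)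
        = (((U : intPoly R K) * V : intPoly R K) : Polynomial K) := by
          rw [hUG]; push_cast; ring
      _ = 1 := by rw [h1]; rfl
  obtain ⟨a, ha⟩ := G.2 (0 : R)
  obtain ⟨b, hb⟩ := V.2 (0 : R)
  have hGunit : IsUnit (G : Polynomial K) := IsUnit.of_mul_eq_one _ hmul
  obtain ⟨e, he, hCe⟩ := Polynomial.isUnit_iff.mp hGunit
  have hVunit : IsUnit (V : Polynomial K) :=
    IsUnit.of_mul_eq_one _ (by rw [mul_comm]; exact hmul)
  obtain ⟨f, hf, hCf⟩ := Polynomial.isUnit_iff.mp hVunit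
  have hea : e = algebraMap R K a := by
    rw [← hCe, Polynomial.eval_C] at ha
    exact ha
  have hfb : f = algebraMap R K b := by
    rw [← hCf, Polynomial.eval_C] at hb
    exact hb
  have hef : e * f = 1 := by
    have h2 : Polynomial.C (e * f) = Polynomial.C (1 : K) := by
      rw [map_mul, hCe, hCf, hmul, map_one]
    exact Polynomial.C_injective h2
  have hab : a * b = 1 := by
    apply inj_i (K := K)
    rw [map_mul, map_one, ← hea, ← hfb]
    exact hef
  exact ⟨Units.mkOfMulEqOne a b hab, by rw [← hCe, hea]; rfl⟩

open scoped Classical in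
/-- minimal valuation of a value of an integer-valued polynomial -/
noncomputable def intVal (π : R) (G : intPoly R K) : ℕ :=
  sInf {n : ℕ | ∃ r a, (G : Polynomial K).eval (algebraMap R K r) = algebraMap R K a ∧
    a ≠ 0 ∧ vv π a = n}

theorem intVal_nonempty (G : intPoly R K) (hG : (G : Polynomial K) ≠ 0) :
    {n : ℕ | ∃ r a, (G : Polynomial K).eval (algebraMap R K r) = algebraMap R K a ∧
      a ≠ 0 ∧ vv π a = n}.Nonempty := by
  classical
  haveI := infinite_R hπ
  set T := (G : Polynomial K).roots.toFinset.preimage (algebraMap R K)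
    ((inj_i (K := K)).injOn) with hT
  obtain ⟨r, hr⟩ := Infinite.exists_notMem_finset T
  obtain ⟨a, ha⟩ := G.2 r
  have ha0 : a ≠ 0 := by
    intro h0
    rw [h0, map_zero] at ha
    apply hr
    rw [hT, Finset.mem_preimage, Multiset.mem_toFinset]
    exact (Polynomial.mem_roots hG).mpr ha
  exact ⟨vv π a, r, a, ha, ha0, rfl⟩

theorem intVal_spec (G : intPoly R K) (hG : (G : Polynomial K) ≠ 0) :
    ∃ r a, (G : Polynomial K).eval (algebraMap R K r) = algebraMap R K a ∧
      a ≠ 0 ∧ vv π a = intVal π G :=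
  Nat.sInf_mem (intVal_nonempty hπ G hG)

omit hπ in
theorem intVal_le (G : intPoly R K) {r : R} {a : R}
    (h : (G : Polynomial K).eval (algebraMap R K r) = algebraMap R K a) (ha : a ≠ 0) :
    intVal π G ≤ vv π a :=
  Nat.sInf_le ⟨r, a, h, ha, rfl⟩

theorem isUnit_of_measure_zero (G : intPoly R K) (hG0 : (G : Polynomial K) ≠ 0)
    (hd : (G : Polynomial K).natDegree = 0) (hv : intVal π G = 0) : IsUnit G := by
  obtain ⟨x, hx⟩ := Polynomial.natDegree_eq_zero.mp hd
  obtain ⟨r, a, ha, ha0, hva⟩ := intVal_spec hπ G hG0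
  rw [hv] at hva
  have hxa : x = algebraMap R K a := by
    rw [← hx, Polynomial.eval_C] at ha
    exact ha
  obtain ⟨w, hw⟩ := (vv_eq_zero_iff hπ ha0).mp hva
  have hGw : (G : Polynomial K) = Polynomial.C (algebraMap R K (w : R)) := by
    rw [← hx, hxa, hw]
  have hinvmem : (Polynomial.C (algebraMap R K ((w⁻¹ : Rˣ) : R))) ∈ intPoly R K := by
    intro r'
    exact ⟨((w⁻¹ : Rˣ) : R), by rw [Polynomial.eval_C]⟩
  apply IsUnit.of_mul_eq_one (a := G) ⟨_, hinvmem⟩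
  apply Subtype.ext
  push_cast
  rw [hGw, ← map_mul, ← map_mul]
  norm_cast
  simp

theorem one_le_measure (G : intPoly R K) (hG0 : (G : Polynomial K) ≠ 0) (hGu : ¬ IsUnit G) :
    1 ≤ (G : Polynomial K).natDegree + intVal π G := by
  by_contra h
  push_neg at h
  exact hGu (isUnit_of_measure_zero hπ G hG0 (by omega) (by omega))

theorem intVal_mul_ge (A B : intPoly R K) (hA : (A : Polynomial K) ≠ 0)
    (hB : (B : Polynomial K) ≠ 0) : intVal π A + intVal π B ≤ intVal π (A * B) := by
  have hAB : ((A * B : intPoly R K) : Polynomial K) ≠ 0 := by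
    push_cast
    exact mul_ne_zero hA hB
  obtain ⟨r, c, hc, hc0, hvc⟩ := intVal_spec hπ (A * B) hAB
  obtain ⟨a, ha⟩ := A.2 r
  obtain ⟨b, hb⟩ := B.2 r
  have hceq : c = a * b := by
    apply inj_i (K := K)
    rw [← hc, map_mul, ← ha, ← hb]
    push_cast
    rw [Polynomial.eval_mul]
  have ha0 : a ≠ 0 := by rintro rfl; rw [zero_mul] at hceq; exact hc0 hceq
  have hb0 : b ≠ 0 := by rintro rfl; rw [mul_zero] at hceq; exact hc0 hceq
  rw [← hvc, hceq, vv_mul hπ ha0 hb0]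
  exact Nat.add_le_add (intVal_le A ha ha0) (intVal_le B hb hb0)

theorem int_atomic : ∀ (W : ℕ) (G : intPoly R K),
    (G : Polynomial K).natDegree + intVal π G ≤ W → (G : Polynomial K) ≠ 0 → ¬ IsUnit G →
    ∃ l : Multiset (intPoly R K), (∀ x ∈ l, Irreducible x) ∧ l.prod = G := by
  intro W
  induction W with
  | zero =>
    intro G hW hG0 hGu
    have := one_le_measure hπ G hG0 hGu
    omega
  | succ W ih =>
    intro G hW hG0 hGu
    by_cases hirr : Irreducible G
    · exact ⟨{G}, by simpa using hirr, by simp⟩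
    · have hex : ∃ A B, G = A * B ∧ ¬ IsUnit A ∧ ¬ IsUnit B := by
        rw [irreducible_iff] at hirr
        push_neg at hirr
        exact hirr hGu
      obtain ⟨A, B, hAB, hA, hB⟩ := hex
      have hvals : (G : Polynomial K) = (A : Polynomial K) * (B : Polynomial K) := by
        rw [hAB]; push_cast; ring
      have hA0 : (A : Polynomial K) ≠ 0 := by
        intro h; rw [h, zero_mul] at hvals; exact hG0 hvals
      have hB0 : (B : Polynomial K) ≠ 0 := by
        intro h; rw [h, mul_zero] at hvals; exact hG0 hvals
      have hdeg : (G : Polynomial K).natDegree =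
          (A : Polynomial K).natDegree + (B : Polynomial K).natDegree := by
        rw [hvals, Polynomial.natDegree_mul hA0 hB0]
      have hval : intVal π A + intVal π B ≤ intVal π G := by
        rw [hAB]; exact intVal_mul_ge hπ A B hA0 hB0
      have hWA : (A : Polynomial K).natDegree + intVal π A ≤ W := by
        have h1 := one_le_measure hπ A hA0 hA
        have h2 := one_le_measure hπ B hB0 hB
        omega
      have hWB : (B : Polynomial K).natDegree + intVal π B ≤ W := by
        have h1 := one_le_measure hπ A hA0 hA
        omega
      obtain ⟨lA, hlA, hlAp⟩ := ih A hWA hA0 hA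
      obtain ⟨lB, hlB, hlBp⟩ := ih B hWB hB0 hB
      refine ⟨lA + lB, ?_, ?_⟩
      · intro x hx
        rcases Multiset.mem_add.mp hx with h | h
        · exact hlA x h
        · exact hlB x h
      · rw [Multiset.prod_add, hlAp, hlBp, hAB]

omit hπ in
theorem prod_assoc_pow {α : Type*} [CommMonoid α] (l : Multiset α) (d : α)
    (h : ∀ x ∈ l, Associated x d) : Associated l.prod (d ^ (Multiset.card l)) := by
  induction l using Multiset.induction with
  | empty => simp
  | cons a l' ih =>
    rw [Multiset.prod_cons, Multiset.card_cons, pow_succ, mul_comm (d ^ Multiset.card l') d]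
    exact Associated.mul_mul (h a (Multiset.mem_cons_self a l'))
      (ih fun x hx => h x (Multiset.mem_cons_of_mem hx))

open scoped Classical in
theorem gp_roots_count (S : Finset R) (u : Rˣ) (z : ℤ) (μ : R → ℕ) {s₀ : R} (hs₀ : s₀ ∈ S) :
    ((gp K π S u z μ) : Polynomial K).roots.count (algebraMap R K s₀) = μ s₀ := by
  classical
  unfold gp
  rw [Polynomial.roots_C_mul _ (mul_ne_zero
    (fun h => u.ne_zero (inj_i (by rw [h, map_zero])))
    (zpow_ne_zero z (iπ_ne_zero hπ)))]
  rw [Polynomial.roots_prod _ _ (Finset.prod_ne_zero_iff.mpr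
    fun s _ => pow_ne_zero _ (Polynomial.X_sub_C_ne_zero _))]
  rw [Multiset.count_bind]
  have hterm : ∀ s ∈ S.val, Multiset.count (algebraMap R K s₀)
      (((Polynomial.X - Polynomial.C (algebraMap R K s)) ^ μ s).roots)
      = if s = s₀ then μ s₀ else 0 := by
    intro s _
    rw [Polynomial.roots_pow, Polynomial.roots_X_sub_C, Multiset.count_nsmul]
    by_cases he : s = s₀
    · subst he
      rw [if_pos rfl, Multiset.count_singleton_self, mul_one]
    · rw [if_neg he, Multiset.count_singleton,
        if_neg (fun hh => he (inj_i (K := K) hh.symm)), mul_zero]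
  rw [Multiset.map_congr rfl hterm]
  have hsum : (Multiset.map (fun s => if s = s₀ then μ s₀ else 0) S.val).sum
      = ∑ s ∈ S, if s = s₀ then μ s₀ else 0 := rfl
  rw [hsum, Finset.sum_ite_eq' S s₀ (fun _ => μ s₀), if_pos hs₀]

end Atomic

section Master

variable {K : Type*} [Field K] [Algebra R K] [IsFractionRing R K]

open scoped Classical in
theorem master (F : Polynomial K) (hF : F ∈ intPoly R K)
    (hsplit : Polynomial.Splits (F.map (RingHom.id K))) (hdeg : 0 < F.degree)
    (S : Finset R) (hroots : ∀ z : K, F.IsRoot z ↔ ∃ s ∈ S, algebraMap R K s = z)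
    (habs : AbsolutelyIrreducible (⟨F, hF⟩ : intPoly R K)) :
    S.Nonempty ∧ (∀ s ∈ S, 0 < F.roots.count (algebraMap R K s)) ∧
      GoodProp π S (fun s => F.roots.count (algebraMap R K s)) := by
  have hF0 : F ≠ 0 := fun h => by simp [h] at hdeg
  set mm : R → ℕ := fun s => F.roots.count (algebraMap R K s) with hmmdef
  -- S is nonempty
  obtain ⟨zr, hzr⟩ := (show ∃ x, F.IsRoot x by rw [Polynomial.map_id] at hsplit; exact hsplit.exists_eval_eq_zero (ne_of_gt hdeg))
  obtain ⟨s00, hs00, _⟩ := (hroots zr).mp hzr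
  have hSne : S.Nonempty := ⟨s00, hs00⟩
  -- multiplicities are positive on S
  have hmm_pos : ∀ s ∈ S, 0 < mm s := fun s hs =>
    Multiset.count_pos.mpr ((Polynomial.mem_roots hF0).mpr ((hroots _).mpr ⟨s, hs, rfl⟩))
  refine ⟨hSne, hmm_pos, ?_⟩
  -- canonical form of F
  have hc0 : F.leadingCoeff ≠ 0 := Polynomial.leadingCoeff_ne_zero.mpr hF0
  obtain ⟨u₀, z₀, hc⟩ := knf (K := K) hπ hc0
  have hcard : Multiset.card F.roots = F.natDegree := by rw [Polynomial.map_id] at hsplit; exact Polynomial.splits_iff_card_roots.mp hsplit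
  have hfact := Polynomial.C_leadingCoeff_mul_prod_multiset_X_sub_C hcard
  have hmap : (Multiset.map (fun a => Polynomial.X - Polynomial.C a) F.roots).prod
      = ∏ z ∈ F.roots.toFinset, (Polynomial.X - Polynomial.C z) ^ (F.roots.count z) :=
    Finset.prod_multiset_map_count _ _
  have htofin : F.roots.toFinset = S.image (algebraMap R K) := by
    ext z
    rw [Multiset.mem_toFinset, Polynomial.mem_roots hF0, hroots z, Finset.mem_image]
  have hprodim : ∏ z ∈ S.image (algebraMap R K),
        (Polynomial.X - Polynomial.C z) ^ (F.roots.count z)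
      = ∏ s ∈ S, (Polynomial.X - Polynomial.C (algebraMap R K s)) ^ (mm s) :=
    Finset.prod_image (fun x _ y _ h => inj_i (K := K) h)
  have hFform : F = gp K π S u₀ z₀ mm := by
    unfold gp
    rw [← hc, ← hprodim, ← htofin, ← hmap, hfact]
  set k := fmin π S mm with hk
  -- F ∈ Int forces z₀ + k ≥ 0
  have hmemF : gp K π S u₀ z₀ mm ∈ intPoly R K := hFform ▸ hF
  have hge : 0 ≤ z₀ + (k : ℤ) := (gp_mem_iff hπ S u₀ z₀ mm).mp hmemF
  have hirr : Irreducible (⟨F, hF⟩ : intPoly R K) := habs.1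
  have hdegsum : 1 ≤ ∑ s ∈ S, mm s := by
    have h1 := hmm_pos s00 hs00
    have h2 := Finset.single_le_sum (f := mm) (fun s _ => Nat.zero_le _) hs00
    omega
  -- irreducibility forces z₀ + k ≤ 0
  have hnotlt : ¬ (1 ≤ z₀ + (k : ℤ)) := by
    intro h2
    have hG1mem : gp K π S 1 1 (fun _ => 0) ∈ intPoly R K :=
      (gp_mem_iff hπ S 1 1 (fun _ => 0)).mpr (by omega)
    have hG2mem : gp K π S u₀ (z₀ - 1) mm ∈ intPoly R K :=
      (gp_mem_iff hπ S u₀ (z₀ - 1) mm).mpr (by omega)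
    have hmul : gp K π S 1 1 (fun _ => 0) * gp K π S u₀ (z₀ - 1) mm = F := by
      rw [gp_mul hπ, hFform]
      have h3 : (1 : ℤ) + (z₀ - 1) = z₀ := by ring
      rw [one_mul, h3]
      exact gp_congr S u₀ z₀ (fun s _ => by omega)
    have heq2 : (⟨F, hF⟩ : intPoly R K) = ⟨_, hG1mem⟩ * ⟨_, hG2mem⟩ :=
      Subtype.ext (by push_cast; rw [hmul])
    rcases hirr.isUnit_or_isUnit heq2 with hU | hU
    · obtain ⟨w, hw⟩ := int_unit_const hU
      have hG1 : gp K π S 1 1 (fun _ => 0) = Polynomial.C (algebraMap R K π) := by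
        unfold gp
        simp [zpow_one]
      have hw' : gp K π S 1 1 (fun _ => 0) = Polynomial.C (algebraMap R K (w : R)) := hw
      rw [hG1] at hw'
      have hπw : π = (w : R) := inj_i (K := K) (Polynomial.C_injective hw')
      exact hπ.not_isUnit (hπw ▸ w.isUnit)
    · obtain ⟨w, hw⟩ := int_unit_const hU
      have hw' : gp K π S u₀ (z₀ - 1) mm = Polynomial.C (algebraMap R K (w : R)) := hw
      have hdeg2 : (gp K π S u₀ (z₀ - 1) mm).natDegree = ∑ s ∈ S, mm s :=
        gp_natDegree hπ S u₀ (z₀ - 1) mm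
      rw [hw', Polynomial.natDegree_C] at hdeg2
      omega
  have hz₀ : z₀ = -(k : ℤ) := by omega
  -- the factorization criterion
  intro N μ ν hN hsum heq
  by_cases hμ0 : ∀ s ∈ S, μ s = 0
  · exact ⟨0, 1, one_pos, fun s hs => by rw [hμ0 s hs]; ring⟩
  by_cases hν0 : ∀ s ∈ S, ν s = 0
  · refine ⟨N, 1, one_pos, fun s hs => ?_⟩
    have h1 := hsum s hs
    have h2 := hν0 s hs
    omega
  push_neg at hμ0 hν0
  obtain ⟨sμ, hsμS, hsμ⟩ := hμ0
  obtain ⟨sν, hsνS, hsν⟩ := hν0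
  have hGmem : gp K π S (u₀ ^ N) (-(fmin π S μ : ℤ)) μ ∈ intPoly R K :=
    (gp_mem_iff hπ S _ _ μ).mpr (by omega)
  have hHmem : gp K π S 1 (-(fmin π S ν : ℤ)) ν ∈ intPoly R K :=
    (gp_mem_iff hπ S _ _ ν).mpr (by omega)
  have hGH : gp K π S (u₀ ^ N) (-(fmin π S μ : ℤ)) μ *
      gp K π S 1 (-(fmin π S ν : ℤ)) ν = F ^ N := by
    rw [gp_mul hπ, hFform, gp_pow hπ]
    have h1 : u₀ ^ N * 1 = u₀ ^ N := mul_one _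
    have h2 : -(fmin π S μ : ℤ) + -(fmin π S ν : ℤ) = (N : ℤ) * z₀ := by
      rw [hz₀]
      have h6 : (fmin π S μ : ℤ) + (fmin π S ν : ℤ) = (N : ℤ) * (k : ℤ) := by
        exact_mod_cast heq
      push_cast
      linarith
    rw [h1, h2]
    exact gp_congr S _ _ (fun s hs => hsum s hs)
  have hGHsub : (⟨_, hGmem⟩ : intPoly R K) * ⟨_, hHmem⟩ = (⟨F, hF⟩ : intPoly R K) ^ N :=
    Subtype.ext (by push_cast; rw [hGH])
  have hGnotunit : ¬ IsUnit (⟨_, hGmem⟩ : intPoly R K) := by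
    intro hU
    obtain ⟨w, hw⟩ := int_unit_const hU
    have hw' : gp K π S (u₀ ^ N) (-(fmin π S μ : ℤ)) μ
        = Polynomial.C (algebraMap R K (w : R)) := hw
    have hdeg2 := gp_natDegree (K := K) hπ S (u₀ ^ N) (-(fmin π S μ : ℤ)) μ
    rw [hw', Polynomial.natDegree_C] at hdeg2
    have hle := Finset.single_le_sum (f := μ) (fun s _ => Nat.zero_le _) hsμS
    omega
  have hHnotunit : ¬ IsUnit (⟨_, hHmem⟩ : intPoly R K) := by
    intro hU
    obtain ⟨w, hw⟩ := int_unit_const hU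
    have hw' : gp K π S 1 (-(fmin π S ν : ℤ)) ν
        = Polynomial.C (algebraMap R K (w : R)) := hw
    have hdeg2 := gp_natDegree (K := K) hπ S 1 (-(fmin π S ν : ℤ)) ν
    rw [hw', Polynomial.natDegree_C] at hdeg2
    have hle := Finset.single_le_sum (f := ν) (fun s _ => Nat.zero_le _) hsνS
    omega
  obtain ⟨lG, hlG, hlGp⟩ := int_atomic hπ _ (⟨_, hGmem⟩ : intPoly R K) le_rfl
    (gp_ne_zero hπ S _ _ μ) hGnotunit
  obtain ⟨lH, hlH, hlHp⟩ := int_atomic hπ _ (⟨_, hHmem⟩ : intPoly R K) le_rfl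
    (gp_ne_zero hπ S _ _ ν) hHnotunit
  have hprodall : (lG + lH).prod = (⟨F, hF⟩ : intPoly R K) ^ N := by
    rw [Multiset.prod_add, hlGp, hlHp, hGHsub]
  obtain ⟨hcard, hassoc⟩ := habs.2 N hN (lG + lH)
    (fun x hx => by
      rcases Multiset.mem_add.mp hx with h | h
      exacts [hlG x h, hlH x h])
    hprodall
  have hlGne : lG ≠ 0 := by
    intro h0
    rw [h0, Multiset.prod_zero] at hlGp
    exact hGnotunit (hlGp ▸ isUnit_one)
  set t := Multiset.card lG with ht
  have hGassoc : Associated ((⟨F, hF⟩ : intPoly R K) ^ t) (⟨_, hGmem⟩ : intPoly R K) := by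
    apply Associated.symm
    rw [← hlGp]
    exact prod_assoc_pow lG _ (fun x hx => hassoc x (Multiset.mem_add.mpr (Or.inl hx)))
  obtain ⟨U, hU⟩ := hGassoc
  obtain ⟨w, hw⟩ := int_unit_const U.isUnit
  have hvals : F ^ t * Polynomial.C (algebraMap R K (w : R))
      = gp K π S (u₀ ^ N) (-(fmin π S μ : ℤ)) μ := by
    have h5 := congrArg Subtype.val hU
    push_cast at h5
    rw [← hw]
    exact h5
  refine ⟨t, 1, one_pos, fun s hs => ?_⟩
  have hcount : (gp K π S (u₀ ^ N) (-(fmin π S μ : ℤ)) μ).roots.count (algebraMap R K s)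
      = μ s := gp_roots_count hπ S _ _ μ hs
  have hiw0 : algebraMap R K (w : R) ≠ 0 := fun h =>
    w.ne_zero (inj_i (K := K) (by rw [h, map_zero]))
  have hcount2 : (F ^ t * Polynomial.C (algebraMap R K (w : R))).roots.count (algebraMap R K s)
      = t * mm s := by
    rw [mul_comm, Polynomial.roots_C_mul _ hiw0, Polynomial.roots_pow, Multiset.count_nsmul]
  rw [one_mul, ← hcount, ← hvals, hcount2]

end Master

end S4Aux


/-- If `F ∈ Int(R)` splits over `K` with root set `S ⊆ R` and is
absolutely irreducible, then `|S| ≡ 1 (mod q - 1)`, where `q` is the order of the residue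
field. -/
theorem statement4 (R K : Type*) [CommRing R] [IsDomain R] [IsDiscreteValuationRing R]
    [Finite (IsLocalRing.ResidueField R)]
    [Field K] [Algebra R K] [IsFractionRing R K]
    (F : Polynomial K) (hF : F ∈ intPoly R K)
    (hsplit : Polynomial.Splits (F.map (RingHom.id K))) (hdeg : 0 < F.degree)
    (S : Finset R) (hroots : ∀ z : K, F.IsRoot z ↔ ∃ s ∈ S, algebraMap R K s = z)
    (habs : AbsolutelyIrreducible (⟨F, hF⟩ : intPoly R K)) :
    S.card ≡ 1 [MOD Nat.card (IsLocalRing.ResidueField R) - 1] := by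
  classical
  obtain ⟨π, hπ⟩ := IsDiscreteValuationRing.exists_irreducible R
  obtain ⟨hSne, hpos, hgood⟩ := S4Aux.master hπ F hF hsplit hdeg S hroots habs
  exact S4Aux.core hπ S.card S le_rfl hSne _ hpos hgood
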